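/- For all r ∈ [0,1) and all θ: |√(1 + re^{iθ}) − 1| ≤ 1 − √(1 − r), where √ denotes the principal branch of the square root. -/

import Mathlib

lemma lemniscate_aux1 (p r b : ℝ) (ht : 0 ≤ p - 1 + r) (hb2 : b ^ 2 = 1 - r) (hb : 0 ≤ b) :
    (p - 1 + r + 2 * b) ^ 2 ≤ (p + 1) ^ 2 - r ^ 2 := by
  nlinarith [mul_nonneg ht (sq_nonneg (1 - b))]

lemma lemniscate_aux2 (x y : ℝ) (hx : 0 ≤ x) (hy : 0 ≤ y) (h : x ^ 2 ≤ y ^ 2) : x ≤ y := by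
  nlinarith

set_option maxHeartbeats 1000000 in
/-- Maximum modulus estimate |√(1+re^{iθ}) − 1| ≤ 1 − √(1−r) for the principal branch. -/
theorem lemniscate_max_modulus (r θ : ℝ) (hr0 : 0 ≤ r) (hr1 : r < 1) :
    ‖(1 + (r : ℂ) * Complex.exp (θ * Complex.I)) ^ ((1 : ℂ) / 2) - 1‖ ≤
      1 - Real.sqrt (1 - r) := by
  set z : ℂ := 1 + (r : ℂ) * Complex.exp (θ * Complex.I) with hz
  have hre : z.re = 1 + r * Real.cos θ := by
    simp [hz, Complex.exp_ofReal_mul_I_re, Complex.exp_ofReal_mul_I_im]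
  have him : z.im = r * Real.sin θ := by
    simp [hz, Complex.exp_ofReal_mul_I_re, Complex.exp_ofReal_mul_I_im]
  set ρ : ℝ := ‖z‖ with hρ
  have hρ0 : 0 ≤ ρ := norm_nonneg z
  have hρ2 : ρ ^ 2 = 1 + 2 * r * Real.cos θ + r ^ 2 := by
    rw [hρ, Complex.sq_norm, Complex.normSq_apply, hre, him]
    nlinarith [Real.sin_sq_add_cos_sq θ]
  have hcos : -1 ≤ Real.cos θ := Real.neg_one_le_cos θ
  have hρge : 1 - r ≤ ρ := by nlinarith
  have hrele : z.re ≤ ρ := Complex.re_le_norm z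
  have hrege : -ρ ≤ z.re := by
    have h1 := Complex.abs_re_le_norm z
    have h2 := neg_abs_le z.re
    linarith
  set u : ℂ := z ^ ((1 : ℂ) / 2) with hu
  have hure : u.re = Real.sqrt ((ρ + z.re) / 2) := by
    rw [hu, one_div, Complex.cpow_inv_two_re]
  have huim : u.im ^ 2 = (ρ - z.re) / 2 := by
    have h := Complex.abs_cpow_inv_two_im z
    rw [← one_div] at h
    have : u.im ^ 2 = |u.im| ^ 2 := (sq_abs _).symm
    rw [this, hu, h, Real.sq_sqrt (by linarith)]
  set A : ℝ := Real.sqrt ((ρ + z.re) / 2) with hA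
  have hA0 : 0 ≤ A := Real.sqrt_nonneg _
  have hA2 : A ^ 2 = (ρ + z.re) / 2 := Real.sq_sqrt (by linarith)
  have hnorm : ‖u - 1‖ ^ 2 = ρ + 1 - 2 * A := by
    rw [Complex.sq_norm, Complex.normSq_apply,
      Complex.sub_re, Complex.sub_im, Complex.one_re, Complex.one_im, hure]
    have : (A - 1) * (A - 1) + (u.im - 0) * (u.im - 0) = A ^ 2 - 2 * A + 1 + u.im ^ 2 := by
      ring
    rw [this, hA2, huim]; ring
  -- relation: z.re = (ρ^2 + 1 - r^2)/2
  have hzre : z.re = (ρ ^ 2 + 1 - r ^ 2) / 2 := by rw [hre]; nlinarith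
  have h4A2 : 4 * A ^ 2 = (ρ + 1) ^ 2 - r ^ 2 := by rw [hA2, hzre]; ring
  set b : ℝ := Real.sqrt (1 - r) with hb
  have hb0 : 0 ≤ b := Real.sqrt_nonneg _
  have hb2 : b ^ 2 = 1 - r := Real.sq_sqrt (by linarith)
  have hb1 : b ≤ 1 := Real.sqrt_le_one.mpr (by linarith)
  -- key inequality: ρ + 1 - 2A ≤ (1 - b)^2
  have hkey : ρ + 1 - 2 * A ≤ (1 - b) ^ 2 := by
    have hc0 : 0 ≤ ρ - 1 + r + 2 * b := by linarith
    have ht : 0 ≤ ρ - 1 + r := by linarith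
    have hsq : (ρ - 1 + r + 2 * b) ^ 2 ≤ (2 * A) ^ 2 := by
      have := lemniscate_aux1 ρ r b ht hb2 hb0
      nlinarith [h4A2]
    have h2A : ρ - 1 + r + 2 * b ≤ 2 * A :=
      lemniscate_aux2 _ _ hc0 (by linarith) hsq
    nlinarith [hb2, h2A]
  have hfin : ‖u - 1‖ ^ 2 ≤ (1 - b) ^ 2 := by rw [hnorm]; exact hkey
  exact lemniscate_aux2 _ _ (norm_nonneg _) (by linarith) hfin
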